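/- Let I and J be homogeneous ideals of R, fix integers i, j ≥ 0, and set M = H^i_I(R) and N = H^j_J(R), regarded as graded left A_n(K)-modules. Then for every ν ≥ 0 the graded K-vector space Tor^{A_n(K)}_ν(M^♯, N) is concentrated in degree -n; that is, Tor^{A_n(K)}_ν(M^♯, N)_j = 0 for all j ≠ -n. -/

import Mathlib

/-! ### The Weyl algebra `A_n(K)` as a quotient of the free algebra. -/

/-- The defining relations of the `n`-th Weyl algebra: the `X_i` commute, the `∂_i` commute,
and `∂_i X_j = X_j ∂_i + δ_{ij}`. -/
inductive WeylRel (K : Type) [Field K] (n : ℕ) :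
    FreeAlgebra K (Fin n ⊕ Fin n) → FreeAlgebra K (Fin n ⊕ Fin n) → Prop
  | xx (i j : Fin n) : WeylRel K n
      (FreeAlgebra.ι K (Sum.inl i) * FreeAlgebra.ι K (Sum.inl j))
      (FreeAlgebra.ι K (Sum.inl j) * FreeAlgebra.ι K (Sum.inl i))
  | dd (i j : Fin n) : WeylRel K n
      (FreeAlgebra.ι K (Sum.inr i) * FreeAlgebra.ι K (Sum.inr j))
      (FreeAlgebra.ι K (Sum.inr j) * FreeAlgebra.ι K (Sum.inr i))
  | dx (i j : Fin n) : WeylRel K n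
      (FreeAlgebra.ι K (Sum.inr i) * FreeAlgebra.ι K (Sum.inl j))
      (FreeAlgebra.ι K (Sum.inl j) * FreeAlgebra.ι K (Sum.inr i) + if i = j then 1 else 0)

/-- The `n`-th Weyl algebra over `K`. -/
abbrev WeylAlgebra (K : Type) [Field K] (n : ℕ) : Type := RingQuot (WeylRel K n)

/-- The variable `X_i` (degree `+1`) in the Weyl algebra. -/
noncomputable def Wx (K : Type) [Field K] {n : ℕ} (i : Fin n) : WeylAlgebra K n :=
  RingQuot.mkAlgHom K (WeylRel K n) (FreeAlgebra.ι K (Sum.inl i))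

/-- The partial derivative `∂_i` (degree `-1`) in the Weyl algebra. -/
noncomputable def Wd (K : Type) [Field K] {n : ℕ} (i : Fin n) : WeylAlgebra K n :=
  RingQuot.mkAlgHom K (WeylRel K n) (FreeAlgebra.ι K (Sum.inr i))

/-- The Euler operator `ℰ_n = ∑ X_i ∂_i`. -/
noncomputable def weylEuler (K : Type) [Field K] (n : ℕ) : WeylAlgebra K n :=
  ∑ i : Fin n, Wx K i * Wd K i

/-- The Euler operator `ℰ_r = ∑_{i < r} X_i ∂_i` of the subalgebra `A_r(K) ⊆ A_n(K)`. -/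
noncomputable def weylEulerUpTo (K : Type) [Field K] (n r : ℕ) : WeylAlgebra K n :=
  ∑ i ∈ Finset.univ.filter (fun i : Fin n => (i : ℕ) < r), Wx K i * Wd K i

/-- Monomials of degree `d` in the variables `X_1, …, X_n` inside the Weyl algebra. -/
def xMonomials (K : Type) [Field K] (n d : ℕ) : Set (WeylAlgebra K n) :=
  {w | ∃ l : List (Fin n), l.length = d ∧ w = (l.map (Wx K)).prod}

/-- `f` is a homogeneous polynomial of degree `d` in `R = K[X_1, …, X_n] ⊆ A_n(K)`. -/
def IsHomogPoly (K : Type) [Field K] {n : ℕ} (f : WeylAlgebra K n) (d : ℕ) : Prop :=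
  f ∈ Submodule.span K (xMonomials K n d)

/-! ### Graded (left) modules over the Weyl algebra. -/

/-- A graded left `A_n(K)`-module: a module over the Weyl algebra together with an internal
`ℤ`-grading, stable under `K` and such that `X_i` raises degree by one and `∂_i` lowers it
by one. -/
structure GWM (K : Type) [Field K] (n : ℕ) where
  carrier : Type
  [acg : AddCommGroup carrier]
  [mod : Module (WeylAlgebra K n) carrier]
  deg : ℤ → AddSubgroup carrier
  isInternal : DirectSum.IsInternal deg
  k_smul : ∀ (c : K) (j : ℤ) (m : carrier), m ∈ deg j →
    algebraMap K (WeylAlgebra K n) c • m ∈ deg j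
  x_smul : ∀ (i : Fin n) (j : ℤ) (m : carrier), m ∈ deg j → Wx K i • m ∈ deg (j + 1)
  d_smul : ∀ (i : Fin n) (j : ℤ) (m : carrier), m ∈ deg j → Wd K i • m ∈ deg (j - 1)

attribute [instance] GWM.acg GWM.mod

instance {K : Type} [Field K] {n : ℕ} : CoeSort (GWM K n) Type := ⟨GWM.carrier⟩

/-- A graded `A_n(K)`-module is *generalized Eulerian* if every homogeneous element `z`
is killed by some power of `ℰ_n - |z|`. -/
def GWM.IsGenEulerian {K : Type} [Field K] {n : ℕ} (M : GWM K n) : Prop :=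
  ∀ (j : ℤ) (m : M.carrier), m ∈ M.deg j →
    ∃ a : ℕ, 1 ≤ a ∧ ((weylEuler K n - (j : WeylAlgebra K n)) ^ a) • m = 0

/-- A graded module is concentrated in degree `d` if all other graded pieces vanish. -/
def GWM.ConcentratedIn {K : Type} [Field K] {n : ℕ} (M : GWM K n) (d : ℤ) : Prop :=
  ∀ j : ℤ, j ≠ d → M.deg j = ⊥

/-! ### Koszul (co)homology of a graded module with respect to commuting operators.

The Koszul complex of operators `u : Fin c → A_n(K)` on `M` has, in homological level `i`,
the module of functions from `i`-element subsets of `Fin c` to `M`.  Cohomology `H^ν` is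
homology in level `c - ν`. -/

/-- Level `i` of the Koszul complex on `c` operators with values in `M`. -/
abbrev KosLevel {K : Type} [Field K] {n : ℕ} (M : GWM K n) (c : ℕ) (i : ℤ) : Type :=
  {S : Finset (Fin c) // (S.card : ℤ) = i} → M.carrier

/-- The Koszul differential (from level `a` to level `b`; it is the genuine differential
when `b = a - 1`): `(dψ)(T) = ∑_{k ∉ T} (-1)^{|{x ∈ T | x < k}|} u_k • ψ(T ∪ {k})`. -/
noncomputable def kosDiff {K : Type} [Field K] {n : ℕ} {M : GWM K n} {c : ℕ}
    (u : Fin c → WeylAlgebra K n) (a b : ℤ) (ψ : KosLevel M c a)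
    (T : {S : Finset (Fin c) // (S.card : ℤ) = b}) : M.carrier :=
  ∑ k ∈ (T.1)ᶜ, ((-1 : ℤ) ^ ((T.1.filter (fun x => x < k)).card)) •
    (u k • (if h : (((insert k T.1).card : ℤ)) = a then ψ ⟨insert k T.1, h⟩ else 0))

/-- A Koszul `i`-chain is a cycle if the differential to level `i - 1` kills it. -/
def kosIsCycle {K : Type} [Field K] {n : ℕ} {M : GWM K n} {c : ℕ}
    (u : Fin c → WeylAlgebra K n) (i : ℤ) (φ : KosLevel M c i) : Prop :=
  ∀ T, kosDiff u i (i - 1) φ T = 0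

/-- A Koszul `i`-chain is a boundary if it is the image of an `(i+1)`-chain. -/
def kosIsBoundary {K : Type} [Field K] {n : ℕ} {M : GWM K n} {c : ℕ}
    (u : Fin c → WeylAlgebra K n) (i : ℤ) (φ : KosLevel M c i) : Prop :=
  ∃ ψ : KosLevel M c (i + 1), (fun T => kosDiff u (i + 1) i ψ T) = φ

/-- A Koszul `i`-chain is homogeneous of (internal) degree `j`: on a subset `S` its value
lies in degree `j - ∑_{k ∈ S} deg u_k`, where `du k` is the degree of the operator `u k`. -/
def kosHomog {K : Type} [Field K] {n : ℕ} {M : GWM K n} {c : ℕ}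
    (du : Fin c → ℤ) (i j : ℤ) (φ : KosLevel M c i) : Prop :=
  ∀ S : {S : Finset (Fin c) // (S.card : ℤ) = i}, φ S ∈ M.deg (j - ∑ k ∈ S.1, du k)

/-! ### Čech complexes.

Local cohomology `H^i_I(M)` for a homogeneous ideal `I = (f_1, …, f_s)` is the `i`-th
cohomology of the Čech complex `0 → M → ⊕ M_{f_k} → ⋯`.  We encode the Čech complex by
abstract data: a family of graded `A_n(K)`-modules `L S` (for `S ⊆ {1,…,s}`), each of which
is the localization of `M` at `∏_{k ∈ S} f_k` (characterized by the usual universal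
properties: the element acts bijectively, every element is a fraction, and the kernel of the
localization map is the torsion). -/

/-- The product `f_S = ∏_{k ∈ S} f_k` (as an ordered list product). -/
noncomputable def cechProd {K : Type} [Field K] {n : ℕ} {s : ℕ}
    (f : Fin s → WeylAlgebra K n) (S : Finset (Fin s)) : WeylAlgebra K n :=
  ((S.sort (· ≤ ·)).map f).prod

/-- Data presenting the Čech complex of a graded `A_n(K)`-module `M` with respect to the
elements `f : Fin s → A_n(K)`. -/
structure CechData (K : Type) [Field K] (n : ℕ) (M : GWM K n) (s : ℕ)
    (f : Fin s → WeylAlgebra K n) where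
  /-- `L S` is the localization `M_{f_S}`, `f_S = ∏_{k ∈ S} f_k`. -/
  L : Finset (Fin s) → GWM K n
  /-- localization maps `M_{f_S} → M_{f_T}` for `S ⊆ T`. -/
  ρ : ∀ {S T : Finset (Fin s)}, S ⊆ T → (L S).carrier → (L T).carrier
  ρ_add : ∀ {S T : Finset (Fin s)} (h : S ⊆ T) (x y : (L S).carrier),
    ρ h (x + y) = ρ h x + ρ h y
  ρ_smul : ∀ {S T : Finset (Fin s)} (h : S ⊆ T) (w : WeylAlgebra K n) (x : (L S).carrier),
    ρ h (w • x) = w • ρ h x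
  ρ_deg : ∀ {S T : Finset (Fin s)} (h : S ⊆ T) (j : ℤ) (x : (L S).carrier),
    x ∈ (L S).deg j → ρ h x ∈ (L T).deg j
  ρ_id : ∀ (S : Finset (Fin s)) (x : (L S).carrier), ρ (le_refl S) x = x
  ρ_comp : ∀ {S T U : Finset (Fin s)} (h1 : S ⊆ T) (h2 : T ⊆ U) (x : (L S).carrier),
    ρ h2 (ρ h1 x) = ρ (h1.trans h2) x
  /-- the identification of `M` with the empty localization. -/
  η : M.carrier → (L ∅).carrier
  η_add : ∀ x y, η (x + y) = η x + η y
  η_smul : ∀ (w : WeylAlgebra K n) (x : M.carrier), η (w • x) = w • η x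
  η_deg : ∀ (j : ℤ) (x : M.carrier), x ∈ M.deg j → η x ∈ (L ∅).deg j
  η_bij : Function.Bijective η
  loc_bij : ∀ S : Finset (Fin s),
    Function.Bijective (fun z : (L S).carrier => (cechProd f S) • z)
  loc_surj : ∀ (S : Finset (Fin s)) (z : (L S).carrier),
    ∃ (m : M.carrier) (k : ℕ), ((cechProd f S) ^ k) • z = ρ (Finset.empty_subset S) (η m)
  loc_ker : ∀ (S : Finset (Fin s)) (m : M.carrier),
    ρ (Finset.empty_subset S) (η m) = 0 ↔ ∃ k : ℕ, ((cechProd f S) ^ k) • m = 0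

/-- Level `i` of the Čech complex. -/
abbrev CechLevel {K : Type} [Field K] {n : ℕ} {M : GWM K n} {s : ℕ}
    {f : Fin s → WeylAlgebra K n} (D : CechData K n M s f) (i : ℤ) : Type :=
  ∀ S : {S : Finset (Fin s) // (S.card : ℤ) = i}, (D.L S.1).carrier

/-- The Čech differential (from level `a` to level `b`; it is the genuine coboundary when
`b = a + 1`): `(dψ)(T) = ∑_{k ∈ T} (-1)^{|{x ∈ T | x < k}|} ρ(ψ(T \ {k}))`. -/
noncomputable def cechDiff {K : Type} [Field K] {n : ℕ} {M : GWM K n} {s : ℕ}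
    {f : Fin s → WeylAlgebra K n} (D : CechData K n M s f) (a b : ℤ) (ψ : CechLevel D a)
    (T : {S : Finset (Fin s) // (S.card : ℤ) = b}) : (D.L T.1).carrier :=
  ∑ k ∈ T.1.attach, ((-1 : ℤ) ^ ((T.1.filter (fun x => x < k.1)).card)) •
    (if h : (((T.1.erase k.1).card : ℤ)) = a then
      D.ρ (Finset.erase_subset k.1 T.1) (ψ ⟨T.1.erase k.1, h⟩) else 0)

def cechIsCycle {K : Type} [Field K] {n : ℕ} {M : GWM K n} {s : ℕ}
    {f : Fin s → WeylAlgebra K n} (D : CechData K n M s f) (i : ℤ)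
    (φ : CechLevel D i) : Prop :=
  ∀ T, cechDiff D i (i + 1) φ T = 0

def cechIsBoundary {K : Type} [Field K] {n : ℕ} {M : GWM K n} {s : ℕ}
    {f : Fin s → WeylAlgebra K n} (D : CechData K n M s f) (i : ℤ)
    (φ : CechLevel D i) : Prop :=
  ∃ ψ : CechLevel D (i - 1), (fun T => cechDiff D (i - 1) i ψ T) = φ

def cechHomog {K : Type} [Field K] {n : ℕ} {M : GWM K n} {s : ℕ}
    {f : Fin s → WeylAlgebra K n} (D : CechData K n M s f) (i j : ℤ)
    (φ : CechLevel D i) : Prop :=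
  ∀ S : {S : Finset (Fin s) // (S.card : ℤ) = i}, φ S ∈ (D.L S.1).deg j

/-- `W` realizes the `i`-th cohomology of the Čech complex `D`, i.e. `W ≅ H^i_{(f)}(M)`
as graded `A_n(K)`-modules. -/
def IsCechCohomologyOf {K : Type} [Field K] {n : ℕ} {M : GWM K n} {s : ℕ}
    {f : Fin s → WeylAlgebra K n} (D : CechData K n M s f) (i : ℤ) (W : GWM K n) : Prop :=
  ∃ π : CechLevel D i → W.carrier,
    (∀ x y, π (x + y) = π x + π y) ∧
    (∀ (w : WeylAlgebra K n) x, π (w • x) = w • π x) ∧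
    (∀ x, cechIsCycle D i x → (π x = 0 ↔ cechIsBoundary D i x)) ∧
    (∀ (j : ℤ) x, cechIsCycle D i x → cechHomog D i j x → π x ∈ W.deg j) ∧
    (∀ (j : ℤ) (w : W.carrier), w ∈ W.deg j →
      ∃ x, cechIsCycle D i x ∧ cechHomog D i j x ∧ π x = w)

/-- `R = K[X_1, …, X_n]`, as the graded left `A_n(K)`-module `A_n(K)/A_n(K)·(∂_1, …, ∂_n)`:
it is generated by a degree-zero element `e` killed by all `∂_i`, whose annihilator is
exactly the left ideal generated by the `∂_i`. -/
def IsPolynomialGWM (K : Type) [Field K] {n : ℕ} (R0 : GWM K n) : Prop :=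
  ∃ e : R0.carrier, e ∈ R0.deg 0 ∧ (∀ i : Fin n, Wd K i • e = 0) ∧
    Submodule.span (WeylAlgebra K n) {e} = ⊤ ∧
    ∀ w : WeylAlgebra K n, w • e = 0 →
      w ∈ Submodule.span (WeylAlgebra K n) (Set.range fun i : Fin n => Wd K i)

/-! ### The standard anti-automorphism `τ` of the Weyl algebra.

`τ(h ∂^α) = (-1)^{|α|} ∂^α h`; equivalently `τ` is the `K`-linear anti-automorphism with
`τ(X_i) = X_i` and `τ(∂_i) = -∂_i`.  For a left `A_n(K)`-module `M`, the standard right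
module `M^♯` has action `m ∘ u = τ(u) m`. -/

/-- The anti-automorphism `τ`, bundled with its characterizing properties (it exists and is
unique). -/
structure TauData (K : Type) [Field K] (n : ℕ) where
  tau : WeylAlgebra K n → WeylAlgebra K n
  tau_add : ∀ a b, tau (a + b) = tau a + tau b
  tau_mul : ∀ a b, tau (a * b) = tau b * tau a
  tau_algebraMap : ∀ c : K, tau (algebraMap K (WeylAlgebra K n) c) =
    algebraMap K (WeylAlgebra K n) c
  tau_x : ∀ i : Fin n, tau (Wx K i) = Wx K i
  tau_d : ∀ i : Fin n, tau (Wd K i) = - Wd K i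

/-! ### Graded free resolutions over the Weyl algebra. -/

/-- A resolution `⋯ → F_1 → F_0 → M → 0` of the graded left `A_n(K)`-module `M` by
graded free left `A_n(K)`-modules (each `F_k` has a homogeneous basis), with degree-zero
`A_n(K)`-linear differentials. -/
structure GradedFreeResData (K : Type) [Field K] (n : ℕ) (M : GWM K n) where
  F : ℕ → GWM K n
  isFree : ∀ k : ℕ, ∃ (κ : Type) (b : κ → (F k).carrier) (sh : κ → ℤ),
    (∀ x, b x ∈ (F k).deg (sh x)) ∧
    Submodule.span (WeylAlgebra K n) (Set.range b) = ⊤ ∧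
    (∀ coeff : κ →₀ WeylAlgebra K n, (coeff.sum fun x w => w • b x) = 0 → coeff = 0)
  d : ∀ k : ℕ, (F (k + 1)).carrier → (F k).carrier
  d_add : ∀ k x y, d k (x + y) = d k x + d k y
  d_smul : ∀ (k : ℕ) (w : WeylAlgebra K n) x, d k (w • x) = w • d k x
  d_deg : ∀ (k : ℕ) (j : ℤ) x, x ∈ (F (k + 1)).deg j → d k x ∈ (F k).deg j
  ε : (F 0).carrier → M.carrier
  ε_add : ∀ x y, ε (x + y) = ε x + ε y
  ε_smul : ∀ (w : WeylAlgebra K n) x, ε (w • x) = w • ε x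
  ε_deg : ∀ (j : ℤ) x, x ∈ (F 0).deg j → ε x ∈ M.deg j
  ε_surj : Function.Surjective ε
  exact0 : ∀ x : (F 0).carrier, ε x = 0 ↔ ∃ y, d 0 y = x
  exact : ∀ (k : ℕ) (x : (F (k + 1)).carrier), d k x = 0 ↔ ∃ y, d (k + 1) y = x

/-! ### `Tor^{A_n(K)}_ν(M^♯, N)` for graded `A_n(K)`-modules `M`, `N`. -/

/-- A graded `K`-vector space. -/
structure GVS (K : Type) [Field K] where
  carrier : Type
  [acg : AddCommGroup carrier]
  [mod : Module K carrier]
  deg : ℤ → Submodule K carrier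
  isInternal : DirectSum.IsInternal deg

attribute [instance] GVS.acg GVS.mod

/-- `(T, β)` realizes the tensor product `M^♯ ⊗_{A_n(K)} F` of the standard right module
`M^♯` associated to the graded left module `M` with the graded left module `F`; the
balancing condition reads `β(τ(u) m, x) = β(m, u x)` since `m ∘ u = τ(u) m` in `M^♯`. -/
def IsTensorSharpOverWeyl {K : Type} [Field K] {n : ℕ} (td : TauData K n)
    (Mw Fw : GWM K n) (T : GVS K) (β : Mw.carrier → Fw.carrier → T.carrier) : Prop :=
  (∀ m m' x, β (m + m') x = β m x + β m' x) ∧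
  (∀ m x x', β m (x + x') = β m x + β m x') ∧
  (∀ (u : WeylAlgebra K n) m x, β (td.tau u • m) x = β m (u • x)) ∧
  (∀ (c : K) m x, β (algebraMap K (WeylAlgebra K n) c • m) x = c • β m x) ∧
  (∀ (p q : ℤ) m x, m ∈ Mw.deg p → x ∈ Fw.deg q → β m x ∈ T.deg (p + q)) ∧
  (AddSubgroup.closure {t : T.carrier | ∃ m x, t = β m x} = ⊤) ∧
  (∀ (P : Type) [AddCommGroup P] (γ : Mw.carrier → Fw.carrier → P),
    (∀ m m' x, γ (m + m') x = γ m x + γ m' x) →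
    (∀ m x x', γ m (x + x') = γ m x + γ m x') →
    (∀ (u : WeylAlgebra K n) m x, γ (td.tau u • m) x = γ m (u • x)) →
    ∃ φ : T.carrier →+ P, ∀ m x, φ (β m x) = γ m x)

/-- Data computing `Tor^{A_n(K)}_•(M^♯, N)`: a graded free resolution `𝔽` of `N` by graded
free left `A_n(K)`-modules, tensored over `A_n(K)` with the right module `M^♯`. -/
structure TorWeylData (K : Type) [Field K] (n : ℕ) (M N : GWM K n) where
  td : TauData K n
  res : GradedFreeResData K n N
  T : ℕ → GVS K
  β : ∀ k, M.carrier → (res.F k).carrier → (T k).carrier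
  isTensor : ∀ k, IsTensorSharpOverWeyl td M (res.F k) (T k) (β k)
  D : ∀ k, (T (k + 1)).carrier → (T k).carrier
  D_add : ∀ k x y, D k (x + y) = D k x + D k y
  D_compat : ∀ k m g, D k (β (k + 1) m g) = β k m (res.d k g)

/-- Cycles of the complex `M^♯ ⊗_{A_n(K)} 𝔽` in homological degree `ν`. -/
def torWIsCycle {K : Type} [Field K] {n : ℕ} {M N : GWM K n} (dat : TorWeylData K n M N) :
    ∀ ν : ℕ, (dat.T ν).carrier → Prop
  | 0 => fun _ => True
  | (k + 1) => fun t => dat.D k t = 0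

/-- Boundaries of the complex `M^♯ ⊗_{A_n(K)} 𝔽` in homological degree `ν`. -/
def torWIsBoundary {K : Type} [Field K] {n : ℕ} {M N : GWM K n} (dat : TorWeylData K n M N)
    (ν : ℕ) (t : (dat.T ν).carrier) : Prop :=
  ∃ y, dat.D ν y = t

/-! ### Auxiliary development -/

section WeylIdentities
variable {K : Type} [Field K] {n : ℕ}

lemma wx_mul_wx (i j : Fin n) :
    (Wx K i : WeylAlgebra K n) * Wx K j = Wx K j * Wx K i := by
  have := RingQuot.mkAlgHom_rel (S := K) (WeylRel.xx (K := K) (n := n) i j)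
  simpa [Wx, map_mul] using this

lemma wd_mul_wd (i j : Fin n) :
    (Wd K i : WeylAlgebra K n) * Wd K j = Wd K j * Wd K i := by
  have := RingQuot.mkAlgHom_rel (S := K) (WeylRel.dd (K := K) (n := n) i j)
  simpa [Wd, map_mul] using this

lemma wd_mul_wx (i j : Fin n) :
    (Wd K i : WeylAlgebra K n) * Wx K j
      = Wx K j * Wd K i + if i = j then 1 else 0 := by
  have := RingQuot.mkAlgHom_rel (S := K) (WeylRel.dx (K := K) (n := n) i j)
  simpa [Wd, Wx, map_mul, map_add, apply_ite, map_one, map_zero] using this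

lemma euler_mul_wx (i : Fin n) :
    weylEuler K n * Wx K i = Wx K i * weylEuler K n + Wx K i := by
  unfold weylEuler
  rw [Finset.sum_mul, Finset.mul_sum]
  have h : ∀ l : Fin n, Wx K l * Wd K l * Wx K i
      = Wx K i * (Wx K l * Wd K l) + (if l = i then Wx K i else 0) := by
    intro l
    rw [mul_assoc, wd_mul_wx l i, mul_add, ← mul_assoc, wx_mul_wx l i, mul_assoc]
    by_cases h : l = i <;> simp [h]
  rw [Finset.sum_congr rfl fun l _ => h l, Finset.sum_add_distrib]
  simp

lemma euler_mul_wd (i : Fin n) :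
    weylEuler K n * Wd K i = Wd K i * weylEuler K n - Wd K i := by
  unfold weylEuler
  rw [Finset.sum_mul, Finset.mul_sum]
  have h : ∀ l : Fin n, Wd K i * (Wx K l * Wd K l)
      = Wx K l * Wd K l * Wd K i + (if i = l then Wd K i else 0) := by
    intro l
    rw [← mul_assoc, wd_mul_wx i l, add_mul, mul_assoc, mul_assoc, wd_mul_wd i l]
    by_cases h : i = l <;> simp [h]
  rw [Finset.sum_congr rfl fun l _ => h l, Finset.sum_add_distrib]
  simp [eq_sub_iff_add_eq, add_comm]

lemma tau_weylEuler (td : TauData K n) :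
    td.tau (weylEuler K n) = - weylEuler K n - (n : WeylAlgebra K n) := by
  have hadd : ∀ (s : Finset (Fin n)) (f : Fin n → WeylAlgebra K n),
      td.tau (∑ i ∈ s, f i) = ∑ i ∈ s, td.tau (f i) := by
    intro s f
    exact map_sum (AddMonoidHom.mk' td.tau td.tau_add) f s
  unfold weylEuler
  rw [hadd]
  have h : ∀ i : Fin n, td.tau (Wx K i * Wd K i) = - (Wx K i * Wd K i) - 1 := by
    intro i
    rw [td.tau_mul, td.tau_d, td.tau_x]
    rw [show (-Wd K i : WeylAlgebra K n) * Wx K i = -(Wd K i * Wx K i) from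
      neg_mul (Wd K i) (Wx K i), wd_mul_wx i i, if_pos rfl]
    abel
  rw [Finset.sum_congr rfl fun i _ => h i, Finset.sum_sub_distrib]
  simp [Finset.sum_neg_distrib]

end WeylIdentities
section GWMTools
set_option synthInstance.maxHeartbeats 1000000
set_option maxHeartbeats 1600000
variable {K : Type} [Field K] {n : ℕ}

namespace GWM

variable (M : GWM K n)

/-- The additive equivalence `⨁ p, M_p ≃+ M` coming from internal grading. -/
noncomputable def decompEquiv : (DirectSum ℤ fun p => M.deg p) ≃+ M.carrier :=
  AddEquiv.ofBijective (DirectSum.coeAddMonoidHom M.deg) M.isInternal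

variable {M}

/-- Homogeneous induction principle. -/
lemma homog_induction {P : M.carrier → Prop} (h0 : P 0)
    (hadd : ∀ a b, P a → P b → P (a + b))
    (hhom : ∀ (p : ℤ) (m : M.carrier), m ∈ M.deg p → P m) : ∀ m, P m := by
  intro m
  obtain ⟨x, rfl⟩ := M.isInternal.surjective m
  induction x using DirectSum.induction_on with
  | zero => simpa using h0
  | of p v => rw [DirectSum.coeAddMonoidHom_of]; exact hhom p v v.2
  | add a b ha hb => rw [map_add]; exact hadd _ _ ha hb

variable (M)

/-- Scalar multiplication by `p` on the `p`-th piece, as an additive map to `M`. -/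
noncomputable def zsmulPiece (p : ℤ) : M.deg p →+ M.carrier :=
  AddMonoidHom.mk' (fun v => p • (v : M.carrier))
    (by intro a b; simp [smul_add])

/-- The grading operator `m ↦ ∑ p • m_p`. -/
noncomputable def gradeOp : M.carrier →+ M.carrier :=
  (DirectSum.toAddMonoid M.zsmulPiece).comp M.decompEquiv.symm.toAddMonoidHom

variable {M}

lemma gradeOp_of_mem {p : ℤ} {m : M.carrier} (h : m ∈ M.deg p) :
    M.gradeOp m = p • m := by
  have h1 : M.decompEquiv.symm m = DirectSum.of (fun q : ℤ => M.deg q) p ⟨m, h⟩ := by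
    rw [AddEquiv.symm_apply_eq]
    show m = DirectSum.coeAddMonoidHom M.deg ((DirectSum.of (fun q : ℤ => M.deg q) p) ⟨m, h⟩)
    exact (DirectSum.coeAddMonoidHom_of M.deg p ⟨m, h⟩).symm
  calc M.gradeOp m
      = DirectSum.toAddMonoid M.zsmulPiece (M.decompEquiv.symm m) := rfl
    _ = p • m := by rw [h1, DirectSum.toAddMonoid_of]; rfl

variable (M)

/-- The action of `w ∈ A_n(K)` as an additive endomorphism. -/
noncomputable def smulHom (w : WeylAlgebra K n) : M.carrier →+ M.carrier :=
  AddMonoidHom.mk' (fun m => w • m) (smul_add w)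

variable {M}

lemma smul_zsmul (w : WeylAlgebra K n) (p : ℤ) (m : M.carrier) :
    w • (p • m) = p • (w • m) :=
  map_zsmul (M.smulHom w) p m

variable (M)

/-- The operator `Θ = ℰ_n - (grading operator)`; it is `A_n(K)`-linear. -/
noncomputable def theta : M.carrier →+ M.carrier :=
  M.smulHom (weylEuler K n) - M.gradeOp

variable {M}

lemma theta_apply (m : M.carrier) :
    M.theta m = weylEuler K n • m - M.gradeOp m := rfl

lemma euler_smul_mem {p : ℤ} {m : M.carrier} (h : m ∈ M.deg p) :
    weylEuler K n • m ∈ M.deg p := by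
  unfold weylEuler
  rw [Finset.sum_smul]
  refine AddSubgroup.sum_mem _ fun i _ => ?_
  rw [mul_smul]
  have := M.x_smul i (p - 1) (Wd K i • m) (M.d_smul i p m h)
  simpa using this

lemma theta_mem {p : ℤ} {m : M.carrier} (h : m ∈ M.deg p) :
    M.theta m ∈ M.deg p := by
  rw [theta_apply, gradeOp_of_mem h]
  exact AddSubgroup.sub_mem _ (euler_smul_mem h) (AddSubgroup.zsmul_mem _ h p)

lemma theta_algebraMap_smul (c : K) (m : M.carrier) :
    M.theta (algebraMap K (WeylAlgebra K n) c • m) =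
      algebraMap K (WeylAlgebra K n) c • M.theta m := by
  induction m using homog_induction with
  | h0 => simp
  | hadd a b ha hb => rw [smul_add, map_add, map_add, smul_add, ha, hb]
  | hhom p m hm =>
      rw [theta_apply, theta_apply, gradeOp_of_mem hm,
        gradeOp_of_mem (M.k_smul c p m hm), smul_sub, smul_smul, smul_smul,
        Algebra.commutes, smul_zsmul]

lemma theta_wx_smul (i : Fin n) (m : M.carrier) :
    M.theta (Wx K i • m) = Wx K i • M.theta m := by
  induction m using homog_induction with
  | h0 => simp
  | hadd a b ha hb => rw [smul_add, map_add, map_add, smul_add, ha, hb]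
  | hhom p m hm =>
      rw [theta_apply, theta_apply, gradeOp_of_mem hm,
        gradeOp_of_mem (M.x_smul i p m hm), smul_sub, smul_smul, euler_mul_wx,
        add_smul, mul_smul, add_zsmul, one_zsmul, smul_zsmul]
      abel

lemma theta_wd_smul (i : Fin n) (m : M.carrier) :
    M.theta (Wd K i • m) = Wd K i • M.theta m := by
  induction m using homog_induction with
  | h0 => simp
  | hadd a b ha hb => rw [smul_add, map_add, map_add, smul_add, ha, hb]
  | hhom p m hm =>
      rw [theta_apply, theta_apply, gradeOp_of_mem hm,
        gradeOp_of_mem (M.d_smul i p m hm), smul_sub, smul_smul, euler_mul_wd,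
        sub_smul, mul_smul, sub_zsmul, one_zsmul, smul_zsmul]
      abel

/-- `Θ` is `A_n(K)`-linear. -/
lemma theta_smul (w : WeylAlgebra K n) (m : M.carrier) :
    M.theta (w • m) = w • M.theta m := by
  obtain ⟨a, rfl⟩ := RingQuot.mkAlgHom_surjective K (WeylRel K n) w
  induction a using FreeAlgebra.induction generalizing m with
  | grade0 r =>
      rw [AlgHom.commutes]
      exact theta_algebraMap_smul r m
  | grade1 x =>
      cases x with
      | inl i => exact theta_wx_smul i m
      | inr i => exact theta_wd_smul i m
  | mul a b ha hb => rw [map_mul, mul_smul, ha, hb, mul_smul]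
  | add a b ha hb => rw [map_add, add_smul, map_add, ha, hb, add_smul]

/-- If `Θ` kills all homogeneous elements then it is zero. -/
lemma theta_eq_zero_of_homog (h : ∀ (p : ℤ) (m : M.carrier), m ∈ M.deg p → M.theta m = 0) :
    ∀ m, M.theta m = 0 := by
  refine homog_induction (by simp) (fun a b ha hb => ?_) h
  rw [map_add, ha, hb, add_zero]

lemma euler_smul_eq_of_theta_zero (h : ∀ m : M.carrier, M.theta m = 0) {p : ℤ}
    {m : M.carrier} (hm : m ∈ M.deg p) : weylEuler K n • m = p • m := by
  have := h m
  rw [theta_apply, gradeOp_of_mem hm, sub_eq_zero] at this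
  exact this

end GWM
end GWMTools
section EulerianChain
set_option synthInstance.maxHeartbeats 1000000
set_option maxHeartbeats 1600000
variable {K : Type} [Field K] {n : ℕ}

/-- A degree-preserving `A_n(K)`-linear map commutes with `Θ`. -/
lemma GWM.theta_comm_of_linear {M₁ M₂ : GWM K n} (φ : M₁.carrier →+ M₂.carrier)
    (hsmul : ∀ (w : WeylAlgebra K n) x, φ (w • x) = w • φ x)
    (hdeg : ∀ (p : ℤ) x, x ∈ M₁.deg p → φ x ∈ M₂.deg p) :
    ∀ x, φ (M₁.theta x) = M₂.theta (φ x) := by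
  refine GWM.homog_induction (by simp) (fun a b ha hb => ?_) (fun p x hx => ?_)
  · rw [map_add, map_add, map_add, map_add, ha, hb]
  · rw [GWM.theta_apply, GWM.gradeOp_of_mem hx, map_sub, hsmul, map_zsmul,
      GWM.theta_apply, GWM.gradeOp_of_mem (hdeg p x hx)]

/-- `Θ = 0` on the polynomial module `R`. -/
lemma theta_zero_of_polynomial {R0 : GWM K n} (h : IsPolynomialGWM K R0) :
    ∀ m : R0.carrier, R0.theta m = 0 := by
  obtain ⟨e, he0, hde, hspan, -⟩ := h
  have heuler : weylEuler K n • e = 0 := by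
    unfold weylEuler
    rw [Finset.sum_smul]
    refine Finset.sum_eq_zero fun i _ => ?_
    rw [mul_smul, hde i, smul_zero]
  have hthe : R0.theta e = 0 := by
    rw [GWM.theta_apply, GWM.gradeOp_of_mem he0, heuler, zero_zsmul, sub_zero]
  intro m
  have hm : m ∈ Submodule.span (WeylAlgebra K n) {e} := by rw [hspan]; trivial
  obtain ⟨w, hw⟩ := Submodule.mem_span_singleton.mp hm
  rw [← hw, GWM.theta_smul, hthe, smul_zero]

lemma cech_pow_smul_eq_zero {M : GWM K n} {s : ℕ} {f : Fin s → WeylAlgebra K n}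
    (D : CechData K n M s f) {S : Finset (Fin s)} {k : ℕ} {z : (D.L S).carrier}
    (h : (cechProd f S) ^ k • z = 0) : z = 0 := by
  induction k generalizing z with
  | zero => simpa using h
  | succ k ih =>
      rw [pow_succ, mul_smul] at h
      have h1 : cechProd f S • z = 0 := ih h
      have h2 : cechProd f S • z = cechProd f S • (0 : (D.L S).carrier) := by
        rw [h1, smul_zero]
      exact (D.loc_bij S).injective h2

/-- `Θ = 0` on each localization in the Čech complex. -/
lemma cech_loc_theta_zero {R0 : GWM K n} {s : ℕ} {f : Fin s → WeylAlgebra K n}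
    (D : CechData K n R0 s f) (h0 : ∀ m : R0.carrier, R0.theta m = 0)
    (S : Finset (Fin s)) : ∀ z : (D.L S).carrier, (D.L S).theta z = 0 := by
  intro z
  obtain ⟨m, k, hmk⟩ := D.loc_surj S z
  set φ : R0.carrier →+ (D.L S).carrier :=
    AddMonoidHom.mk' (fun m => D.ρ (Finset.empty_subset S) (D.η m))
      (by intro a b; show D.ρ _ (D.η (a + b)) = _; rw [D.η_add, D.ρ_add]) with hφ
  have hφs : ∀ (w : WeylAlgebra K n) x, φ (w • x) = w • φ x := by
    intro w x
    show D.ρ _ (D.η (w • x)) = _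
    rw [D.η_smul, D.ρ_smul]
    rfl
  have hφd : ∀ (p : ℤ) x, x ∈ R0.deg p → φ x ∈ (D.L S).deg p := fun p x hx =>
    D.ρ_deg _ p _ (D.η_deg p x hx)
  have key : (cechProd f S) ^ k • (D.L S).theta z = 0 := by
    rw [← GWM.theta_smul, hmk,
      show D.ρ (Finset.empty_subset S) (D.η m) = φ m from rfl,
      ← GWM.theta_comm_of_linear φ hφs hφd m, h0, map_zero]
  exact cech_pow_smul_eq_zero D key

/-- `Θ = 0` on any Čech cohomology of `R`. -/
lemma theta_zero_of_cechCohomology {R0 M : GWM K n} {s : ℕ}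
    {f : Fin s → WeylAlgebra K n} {D : CechData K n R0 s f}
    (h0 : ∀ m : R0.carrier, R0.theta m = 0) {i : ℤ}
    (hM : IsCechCohomologyOf D i M) : ∀ m : M.carrier, M.theta m = 0 := by
  obtain ⟨π, πadd, πsmul, -, -, πsurj⟩ := hM
  apply GWM.theta_eq_zero_of_homog
  intro p w hw
  obtain ⟨x, -, hxhom, hπx⟩ := πsurj p w hw
  have hx : weylEuler K n • x = ((p : WeylAlgebra K n) • x : CechLevel D i) := by
    funext S
    show weylEuler K n • x S = (p : WeylAlgebra K n) • x S
    rw [Int.cast_smul_eq_zsmul]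
    exact GWM.euler_smul_eq_of_theta_zero (cech_loc_theta_zero D h0 S.1) (hxhom S)
  rw [GWM.theta_apply, GWM.gradeOp_of_mem hw, ← hπx, ← πsmul, hx, πsmul,
    Int.cast_smul_eq_zsmul, sub_self]

end EulerianChain
section Resolution
set_option synthInstance.maxHeartbeats 1000000
set_option maxHeartbeats 1600000
variable {K : Type} [Field K] {n : ℕ}

/-- `Θ` as a `A_n(K)`-linear map. -/
noncomputable def GWM.thetaL (M : GWM K n) :
    M.carrier →ₗ[WeylAlgebra K n] M.carrier where
  toFun := M.theta
  map_add' := fun a b => map_add _ a b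
  map_smul' := fun w x => GWM.theta_smul w x

@[simp] lemma GWM.thetaL_apply (M : GWM K n) (x : M.carrier) :
    M.thetaL x = M.theta x := rfl

variable {N : GWM K n} (res : GradedFreeResData K n N)

/-- The differential of the resolution, as a linear map. -/
noncomputable def GradedFreeResData.dL (k : ℕ) :
    (res.F (k + 1)).carrier →ₗ[WeylAlgebra K n] (res.F k).carrier where
  toFun := res.d k
  map_add' := res.d_add k
  map_smul' := res.d_smul k

@[simp] lemma GradedFreeResData.dL_apply (k : ℕ) (x : (res.F (k + 1)).carrier) :
    res.dL k x = res.d k x := rfl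

lemma GradedFreeResData.dd_zero (k : ℕ) (x : (res.F (k + 2)).carrier) :
    res.d k (res.d (k + 1) x) = 0 :=
  (res.exact k _).mpr ⟨x, rfl⟩

lemma GradedFreeResData.theta_d (k : ℕ) (x : (res.F (k + 1)).carrier) :
    res.d k ((res.F (k + 1)).theta x) = (res.F k).theta (res.d k x) :=
  GWM.theta_comm_of_linear
    (AddMonoidHom.mk' (res.d k) (res.d_add k)) (res.d_smul k) (res.d_deg k) x

/-- Lifting a map into the image of the differential through a free module. -/
lemma GradedFreeResData.exists_lift (a b : ℕ)
    (φ : (res.F a).carrier →ₗ[WeylAlgebra K n] (res.F b).carrier)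
    (hφ : ∀ x, ∃ y, res.d b y = φ x) :
    ∃ h : (res.F a).carrier →ₗ[WeylAlgebra K n] (res.F (b + 1)).carrier,
      ∀ x, res.d b (h x) = φ x := by
  classical
  obtain ⟨κ, bb, sh, hdeg, hspan, hindep⟩ := res.isFree a
  set W := WeylAlgebra K n
  let tot : (κ →₀ W) →ₗ[W] (res.F a).carrier := Finsupp.linearCombination W bb
  have hsurj : Function.Surjective tot := by
    rw [← LinearMap.range_eq_top, Finsupp.range_linearCombination, hspan]
  have hinj : Function.Injective tot := by
    rw [injective_iff_map_eq_zero]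
    intro c hc
    exact hindep c (by rw [← Finsupp.linearCombination_apply]; exact hc)
  let e := LinearEquiv.ofBijective tot ⟨hinj, hsurj⟩
  choose t ht using fun x : κ => hφ (bb x)
  refine ⟨(Finsupp.linearCombination W t).comp (e.symm : (res.F a).carrier →ₗ[W] (κ →₀ W)), ?_⟩
  intro x
  have hx : x ∈ Submodule.span W (Set.range bb) := by rw [hspan]; trivial
  induction hx using Submodule.span_induction with
  | mem x hxx =>
      obtain ⟨i, rfl⟩ := hxx
      have he : e.symm (bb i) = Finsupp.single i 1 := by
        rw [LinearEquiv.symm_apply_eq]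
        exact (show tot (Finsupp.single i 1) = bb i by
          rw [Finsupp.linearCombination_single, one_smul]).symm
      rw [LinearMap.comp_apply]
      show res.d b (Finsupp.linearCombination W t (e.symm (bb i))) = φ (bb i)
      rw [he, Finsupp.linearCombination_single, one_smul, ht i]
  | zero => rw [map_zero, map_zero, show res.d b 0 = 0 from map_zero (res.dL b)]
  | add x y hxm hym hx hy =>
      rw [map_add, map_add,
        show ∀ u v, res.d b (u + v) = res.d b u + res.d b v from res.d_add b, hx, hy]
  | smul w x hxm hx =>
      rw [map_smul, map_smul,
        show ∀ u, res.d b (w • u) = w • res.d b u from res.d_smul b w, hx]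

end Resolution
section Homotopy
set_option synthInstance.maxHeartbeats 1000000
set_option maxHeartbeats 1600000
variable {K : Type} [Field K] {n : ℕ} {N : GWM K n} (res : GradedFreeResData K n N)

lemma GradedFreeResData.exists_homotopy (hN : ∀ m : N.carrier, N.theta m = 0) :
    ∃ h : ∀ k, (res.F k).carrier →ₗ[WeylAlgebra K n] (res.F (k + 1)).carrier,
      (∀ x, res.d 0 (h 0 x) = (res.F 0).theta x) ∧
      (∀ k x, res.d (k + 1) (h (k + 1) x)
        = (res.F (k + 1)).theta x - h k (res.d k x)) := by
  classical
  obtain ⟨h0, hh0⟩ := res.exists_lift 0 0 (res.F 0).thetaL (fun x => by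
    apply (res.exact0 _).mp
    have hc := GWM.theta_comm_of_linear
      (AddMonoidHom.mk' res.ε res.ε_add) res.ε_smul res.ε_deg x
    rw [GWM.thetaL_apply]
    calc res.ε ((res.F 0).theta x) = N.theta (res.ε x) := hc
      _ = 0 := hN _)
  have step : ∀ (k : ℕ)
      (g : (res.F k).carrier →ₗ[WeylAlgebra K n] (res.F (k+1)).carrier),
      (∀ y : (res.F (k+1)).carrier,
        res.d k (g (res.d k y)) = (res.F k).theta (res.d k y)) →
      ∃ g' : (res.F (k+1)).carrier →ₗ[WeylAlgebra K n] (res.F (k+2)).carrier,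
        ∀ x, res.d (k+1) (g' x) = (res.F (k+1)).theta x - g (res.d k x) := by
    intro k g hg
    obtain ⟨g', hg'⟩ := res.exists_lift (k+1) (k+1)
      ((res.F (k+1)).thetaL - g.comp (res.dL k))
      (fun x => by
        apply (res.exact k _).mp
        show res.d k (((res.F (k+1)).thetaL - g.comp (res.dL k)) x) = 0
        rw [LinearMap.sub_apply, LinearMap.comp_apply, GWM.thetaL_apply,
          GradedFreeResData.dL_apply,
          show ∀ u v, res.d k (u - v) = res.d k u - res.d k v from
            fun u v => map_sub (res.dL k) u v,
          res.theta_d k x, hg x, sub_self])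
    refine ⟨g', fun x => ?_⟩
    have := hg' x
    rwa [LinearMap.sub_apply, LinearMap.comp_apply, GWM.thetaL_apply,
      GradedFreeResData.dL_apply] at this
  have J0 : ∀ y : (res.F 1).carrier,
      res.d 0 (h0 (res.d 0 y)) = (res.F 0).theta (res.d 0 y) := fun y => by
    rw [hh0 _, GWM.thetaL_apply]
  obtain ⟨g1, hg1⟩ := step 0 h0 J0
  let T : ℕ → Type := fun k =>
    {p : ((res.F k).carrier →ₗ[WeylAlgebra K n] (res.F (k+1)).carrier)
        × ((res.F (k+1)).carrier →ₗ[WeylAlgebra K n] (res.F (k+2)).carrier) //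
      ∀ x, res.d (k+1) (p.2 x) = (res.F (k+1)).theta x - p.1 (res.d k x)}
  have Jnext : ∀ (k : ℕ) (q : T k) (y : (res.F (k+2)).carrier),
      res.d (k+1) (q.1.2 (res.d (k+1) y)) = (res.F (k+1)).theta (res.d (k+1) y) := by
    intro k q y
    rw [q.2 (res.d (k+1) y), res.dd_zero k y, map_zero, sub_zero]
  let stepFn : ∀ k, T k → T (k+1) := fun k q =>
    ⟨(q.1.2, Classical.choose (step (k+1) q.1.2 (Jnext k q))),
      Classical.choose_spec (step (k+1) q.1.2 (Jnext k q))⟩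
  let seq : ∀ k, T k := fun k => Nat.rec ⟨(h0, g1), hg1⟩ stepFn k
  refine ⟨fun k => (seq k).1.1, fun x => hh0 x, fun k x => ?_⟩
  exact (seq k).2 x

end Homotopy
section GVSTools
set_option synthInstance.maxHeartbeats 1000000
set_option maxHeartbeats 1600000
variable {K : Type} [Field K]

namespace GVS

variable (V : GVS K)

noncomputable def decompEquiv : (DirectSum ℤ fun p => V.deg p) ≃+ V.carrier :=
  AddEquiv.ofBijective (DirectSum.coeAddMonoidHom V.deg) V.isInternal

noncomputable def zsmulPiece (p : ℤ) : V.deg p →+ V.carrier :=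
  AddMonoidHom.mk' (fun v => p • (v : V.carrier)) (by intro a b; simp [smul_add])

noncomputable def gradeOp : V.carrier →+ V.carrier :=
  (DirectSum.toAddMonoid V.zsmulPiece).comp V.decompEquiv.symm.toAddMonoidHom

variable {V}

lemma gradeOp_of_mem {p : ℤ} {v : V.carrier} (h : v ∈ V.deg p) :
    V.gradeOp v = p • v := by
  have h1 : V.decompEquiv.symm v = DirectSum.of (fun q : ℤ => V.deg q) p ⟨v, h⟩ := by
    rw [AddEquiv.symm_apply_eq]
    show v = DirectSum.coeAddMonoidHom V.deg ((DirectSum.of (fun q : ℤ => V.deg q) p) ⟨v, h⟩)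
    exact (DirectSum.coeAddMonoidHom_of V.deg p ⟨v, h⟩).symm
  calc V.gradeOp v
      = DirectSum.toAddMonoid V.zsmulPiece (V.decompEquiv.symm v) := rfl
    _ = p • v := by rw [h1, DirectSum.toAddMonoid_of]; rfl

end GVS
end GVSTools

set_option synthInstance.maxHeartbeats 1000000
set_option maxHeartbeats 3200000

/-- Theorem `first`.  Let `I = (f)`, `J = (g)` be homogeneous ideals of
`R`, fix `i, j ≥ 0`, and set `M = H^i_I(R)`, `N = H^j_J(R)` (realized as Čech cohomologies
of `R₀ = R`), regarded as graded left `A_n(K)`-modules.  Then for every `ν ≥ 0` the graded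
`K`-vector space `Tor^{A_n(K)}_ν(M^♯, N)` is concentrated in degree `-n`:  in the complex
`M^♯ ⊗_{A_n(K)} 𝔽` (for a graded free resolution `𝔽` of `N`), every homogeneous cycle of
degree `d ≠ -n` is a boundary. -/
theorem torWeyl_sharp_of_local_cohomologies_concentrated
    (K : Type) [Field K] [CharZero K] (n : ℕ)
    (R0 : GWM K n) (hR0 : IsPolynomialGWM K R0)
    (s : ℕ) (f : Fin s → WeylAlgebra K n) (df : Fin s → ℕ)
    (hf : ∀ k, IsHomogPoly K (f k) (df k))
    (t : ℕ) (g : Fin t → WeylAlgebra K n) (dg : Fin t → ℕ)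
    (hg : ∀ k, IsHomogPoly K (g k) (dg k))
    (i j : ℕ)
    (DI : CechData K n R0 s f) (M : GWM K n) (hM : IsCechCohomologyOf DI (i : ℤ) M)
    (DJ : CechData K n R0 t g) (N : GWM K n) (hN : IsCechCohomologyOf DJ (j : ℤ) N)
    (ν : ℕ) (dat : TorWeylData K n M N)
    (d : ℤ) (hd : d ≠ -(n : ℤ))
    (z : (dat.T ν).carrier) (hz : torWIsCycle dat ν z) (hzd : z ∈ (dat.T ν).deg d) :
    torWIsBoundary dat ν z := by
    classical
  have hR0θ := theta_zero_of_polynomial hR0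
  have hMθ : ∀ m : M.carrier, M.theta m = 0 := theta_zero_of_cechCohomology hR0θ hM
  have hNθ : ∀ m : N.carrier, N.theta m = 0 := theta_zero_of_cechCohomology hR0θ hN
  obtain ⟨hres, hh0, hhS⟩ := dat.res.exists_homotopy hNθ
  have βaddl : ∀ (k : ℕ) m m' x, dat.β k (m + m') x = dat.β k m x + dat.β k m' x :=
    fun k => (dat.isTensor k).1
  have βaddr : ∀ (k : ℕ) m x x', dat.β k m (x + x') = dat.β k m x + dat.β k m x' :=
    fun k => (dat.isTensor k).2.1
  have βtau : ∀ (k : ℕ) (u : WeylAlgebra K n) m x,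
      dat.β k (dat.td.tau u • m) x = dat.β k m (u • x) := fun k => (dat.isTensor k).2.2.1
  have βksmul : ∀ (k : ℕ) (c : K) m x,
      dat.β k (algebraMap K (WeylAlgebra K n) c • m) x = c • dat.β k m x :=
    fun k => (dat.isTensor k).2.2.2.1
  have βdeg : ∀ (k : ℕ) (p q : ℤ) m x, m ∈ M.deg p → x ∈ (dat.res.F k).deg q →
      dat.β k m x ∈ (dat.T k).deg (p + q) := fun k => (dat.isTensor k).2.2.2.2.1
  have βclos : ∀ k : ℕ,
      AddSubgroup.closure {u : (dat.T k).carrier | ∃ m x, u = dat.β k m x} = ⊤ :=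
    fun k => (dat.isTensor k).2.2.2.2.2.1
  have βlift := fun k : ℕ => (dat.isTensor k).2.2.2.2.2.2
  have tind : ∀ (k : ℕ) (P : (dat.T k).carrier → Prop), P 0 →
      (∀ a b, P a → P b → P (a + b)) → (∀ a, P a → P (-a)) →
      (∀ m x, P (dat.β k m x)) → ∀ u, P u := by
    intro k P h0 hadd hneg hβ u
    have hu : u ∈ AddSubgroup.closure {u : (dat.T k).carrier | ∃ m x, u = dat.β k m x} := by
      rw [βclos k]; trivial
    induction hu using AddSubgroup.closure_induction with
    | mem a ha => obtain ⟨m, x, rfl⟩ := ha; exact hβ m x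
    | zero => exact h0
    | add a b _ _ pa pb => exact hadd a b pa pb
    | neg a _ pa => exact hneg a pa
  have βzl : ∀ (k : ℕ) (c : ℤ) m x, dat.β k (c • m) x = c • dat.β k m x := fun k c m x =>
    map_zsmul (AddMonoidHom.mk' (fun m => dat.β k m x) (fun a b => βaddl k a b x)) c m
  have βzr : ∀ (k : ℕ) (c : ℤ) m x, dat.β k m (c • x) = c • dat.β k m x := fun k c m x =>
    map_zsmul (AddMonoidHom.mk' (dat.β k m) (fun a b => βaddr k m a b)) c x
  have β0l : ∀ (k : ℕ) x, dat.β k 0 x = 0 := fun k x =>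
    map_zero (AddMonoidHom.mk' (fun m => dat.β k m x) (fun a b => βaddl k a b x))
  have β0r : ∀ (k : ℕ) m, dat.β k m 0 = 0 := fun k m =>
    map_zero (AddMonoidHom.mk' (dat.β k m) (fun a b => βaddr k m a b))
  have βsubl : ∀ (k : ℕ) m m' x, dat.β k (m - m') x = dat.β k m x - dat.β k m' x :=
    fun k m m' x =>
    map_sub (AddMonoidHom.mk' (fun m => dat.β k m x) (fun a b => βaddl k a b x)) m m'
  have βnegl : ∀ (k : ℕ) m x, dat.β k (-m) x = - dat.β k m x := fun k m x =>
    map_neg (AddMonoidHom.mk' (fun m => dat.β k m x) (fun a b => βaddl k a b x)) m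
  have βsubr : ∀ (k : ℕ) m x x', dat.β k m (x - x') = dat.β k m x - dat.β k m x' :=
    fun k m x x' => map_sub (AddMonoidHom.mk' (dat.β k m) (fun a b => βaddr k m a b)) x x'
  have D0 : ∀ k : ℕ, dat.D k 0 = 0 := fun k =>
    map_zero (AddMonoidHom.mk' (dat.D k) (dat.D_add k))
  have Dneg : ∀ (k : ℕ) u, dat.D k (-u) = - dat.D k u := fun k u =>
    map_neg (AddMonoidHom.mk' (dat.D k) (dat.D_add k)) u
  have DK : ∀ (k : ℕ) (c : K) u, dat.D k (c • u) = c • dat.D k u := by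
    intro k c
    refine tind (k + 1) (fun u => dat.D k (c • u) = c • dat.D k u) ?_ ?_ ?_ ?_
    · beta_reduce
      simp only [smul_zero, D0]
    · intro a b ha hb
      beta_reduce at ha hb ⊢
      rw [smul_add, dat.D_add, dat.D_add, smul_add, ha, hb]
    · intro a ha
      beta_reduce at ha ⊢
      rw [smul_neg, Dneg, ha, Dneg, smul_neg]
    · intro m x
      beta_reduce
      rw [← βksmul (k + 1) c m x, dat.D_compat, dat.D_compat, βksmul k c m (dat.res.d k x)]
  obtain ⟨Φ, hΦ⟩ := βlift ν (dat.T ν).carrier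
    (fun m x => dat.β ν m ((dat.res.F ν).theta x))
    (fun m m' x => βaddl ν m m' ((dat.res.F ν).theta x))
    (fun m x x' => by beta_reduce; rw [map_add, βaddr])
    (fun u m x => by beta_reduce; rw [βtau ν u m, GWM.theta_smul])
  have assoc6 : ∀ A1 A2 B1 B2 C1 C2 : (dat.T ν).carrier,
      A1 + A2 + (B1 + B2) + (C1 + C2) = A1 + B1 + C1 + (A2 + B2 + C2) := by
    intros; abel
  have genid : ∀ m, ∀ x, dat.β ν m ((dat.res.F ν).theta x) + (n : ℤ) • dat.β ν m x
      + (dat.T ν).gradeOp (dat.β ν m x) = 0 := by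
    refine GWM.homog_induction ?_ ?_ ?_
    · intro x
      beta_reduce
      simp only [β0l, map_zero, smul_zero, add_zero]
    · intro a b ha hb x
      beta_reduce at ha hb ⊢
      rw [βaddl, βaddl, smul_add, map_add, assoc6, ha x, hb x, add_zero]
    · intro p m hm
      refine GWM.homog_induction ?_ ?_ ?_
      · beta_reduce
        simp only [map_zero, β0r, smul_zero, add_zero]
      · intro a b ha hb
        beta_reduce at ha hb ⊢
        rw [map_add, βaddr, βaddr, smul_add, map_add, assoc6, ha, hb, add_zero]
      · intro q x hx
        beta_reduce
        have hθ : (dat.res.F ν).theta x = weylEuler K n • x - q • x := by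
          rw [GWM.theta_apply, GWM.gradeOp_of_mem hx]
        have hE : dat.β ν m (weylEuler K n • x)
            = -(p • dat.β ν m x) - (n : ℤ) • dat.β ν m x := by
          rw [← βtau ν (weylEuler K n) m x, tau_weylEuler dat.td]
          have h1 : (-(weylEuler K n) - (n : WeylAlgebra K n)) • m
              = -(p • m) - (n : ℤ) • m := by
            rw [sub_smul, neg_smul, GWM.euler_smul_eq_of_theta_zero hMθ hm,
              show ((n : WeylAlgebra K n)) = (((n : ℤ) : WeylAlgebra K n)) from
                (Int.cast_natCast n).symm,
              Int.cast_smul_eq_zsmul]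
          rw [h1, βsubl, βnegl, βzl, βzl]
        rw [hθ, βsubr, βzr, hE, GVS.gradeOp_of_mem (βdeg ν p q m x hm hx), add_smul]
        abel
  have keyid : ∀ u : (dat.T ν).carrier,
      Φ u + (n : ℤ) • u + (dat.T ν).gradeOp u = 0 := by
    refine tind ν _ ?_ ?_ ?_ ?_
    · beta_reduce
      simp only [map_zero, smul_zero, add_zero]
    · intro a b ha hb
      beta_reduce at ha hb ⊢
      rw [map_add, smul_add, map_add, assoc6, ha, hb, add_zero]
    · intro a ha
      beta_reduce at ha ⊢
      rw [map_neg, smul_neg, map_neg, ← neg_add, ← neg_add, ha, neg_zero]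
    · intro m x
      beta_reduce
      rw [hΦ]
      exact genid m x
  have hΦz : Φ z = (-(n : ℤ) - d) • z := by
    have h3 := keyid z
    rw [GVS.gradeOp_of_mem hzd] at h3
    rw [sub_smul, neg_smul, eq_sub_iff_add_eq, eq_neg_iff_add_eq_zero]
    calc Φ z + d • z + (n : ℤ) • z = Φ z + (n : ℤ) • z + d • z := by abel
      _ = 0 := h3
  have hc : ((-(n : ℤ) - d : ℤ) : K) ≠ 0 := by
    rw [Int.cast_ne_zero]
    omega
  have final : ∀ y : (dat.T (ν + 1)).carrier, dat.D ν y = Φ z → torWIsBoundary dat ν z := by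
    intro y hy
    refine ⟨((-(n : ℤ) - d : ℤ) : K)⁻¹ • y, ?_⟩
    rw [DK ν _ y, hy, hΦz, ← Int.cast_smul_eq_zsmul K, smul_smul,
      inv_mul_cancel₀ hc, one_smul]
  cases ν with
  | zero =>
      obtain ⟨HH, hHH⟩ := βlift 0 (dat.T 1).carrier (fun m x => dat.β 1 m (hres 0 x))
        (fun m m' x => βaddl 1 m m' (hres 0 x))
        (fun m x x' => by beta_reduce; rw [map_add, βaddr])
        (fun u m x => by beta_reduce; rw [βtau 1 u m (hres 0 x), map_smul])
      have chain : ∀ u : (dat.T 0).carrier, dat.D 0 (HH u) = Φ u := by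
        refine tind 0 _ ?_ ?_ ?_ ?_
        · beta_reduce
          simp only [map_zero, D0]
        · intro a b ha hb
          beta_reduce at ha hb ⊢
          rw [map_add, dat.D_add, map_add, ha, hb]
        · intro a ha
          beta_reduce at ha ⊢
          rw [map_neg, Dneg, map_neg, ha]
        · intro m x
          beta_reduce
          rw [hHH, dat.D_compat, hh0, hΦ]
      exact final (HH z) (chain z)
  | succ k =>
      obtain ⟨HH, hHH⟩ := βlift (k + 1) (dat.T (k + 2)).carrier
        (fun m x => dat.β (k + 2) m (hres (k + 1) x))
        (fun m m' x => βaddl (k + 2) m m' (hres (k + 1) x))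
        (fun m x x' => by beta_reduce; rw [map_add, βaddr])
        (fun u m x => by beta_reduce; rw [βtau (k + 2) u m (hres (k + 1) x), map_smul])
      obtain ⟨HH', hHH'⟩ := βlift k (dat.T (k + 1)).carrier
        (fun m x => dat.β (k + 1) m (hres k x))
        (fun m m' x => βaddl (k + 1) m m' (hres k x))
        (fun m x x' => by beta_reduce; rw [map_add, βaddr])
        (fun u m x => by beta_reduce; rw [βtau (k + 1) u m (hres k x), map_smul])
      have chain : ∀ u : (dat.T (k + 1)).carrier,
          dat.D (k + 1) (HH u) + HH' (dat.D k u) = Φ u := by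
        refine tind (k + 1) _ ?_ ?_ ?_ ?_
        · beta_reduce
          simp only [map_zero, D0, add_zero]
        · intro a b ha hb
          beta_reduce at ha hb ⊢
          rw [map_add, dat.D_add, map_add, dat.D_add, map_add, ← ha, ← hb]
          abel
        · intro a ha
          beta_reduce at ha ⊢
          rw [map_neg, Dneg, map_neg, Dneg, map_neg, ← ha]
          abel
        · intro m x
          beta_reduce
          rw [hHH, dat.D_compat, dat.D_compat, hHH', ← βaddr, hhS k x, sub_add_cancel, hΦ]
      have hz' : dat.D k z = 0 := hz
      have hDz : dat.D (k + 1) (HH z) = Φ z := by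
        rw [← chain z, hz', map_zero, add_zero]
      exact final (HH z) hDz
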